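/- Given a Partition instance Y = {y₁,…,yₙ} of positive integers with b = ∑ yᵢ, the OneInTwoPartition instance X = {(i·b + yᵢ, i·b) : i ∈ [n]} is a yes-instance (there exist disjoint sets X₁, X₂ of size n, each containing exactly one element from each pair, with ∑X₁ = ∑X₂) if and only if Y admits a subset Y' with ∑_{y∈Y'} y = b/2. -/

import Mathlib

/-- Correctness of the reduction from Partition to OneInTwoPartition:
for positive integers `Y 1,…,Y n` with `b = ∑ Y i`, one can choose exactly one element
from each pair `(i·b + Y i, i·b)` into `X₁` (the other into `X₂`) with `∑X₁ = ∑X₂`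
iff `Y` admits a subset summing to `b/2`. -/
theorem stmt_18 (n : ℕ) (Y : ℕ → ℤ) (b : ℤ)
    (hb : b = ∑ i ∈ Finset.Icc 1 n, Y i)
    (hpos : ∀ i ∈ Finset.Icc 1 n, 0 < Y i) :
    (∃ f : ℕ → Bool,
      ∑ i ∈ Finset.Icc 1 n, (if f i then (i : ℤ) * b + Y i else (i : ℤ) * b) =
        ∑ i ∈ Finset.Icc 1 n, (if f i then (i : ℤ) * b else (i : ℤ) * b + Y i)) ↔
    (∃ T ⊆ Finset.Icc 1 n, 2 * ∑ i ∈ T, Y i = b) := by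
  have key : ∀ f : ℕ → Bool,
      b = ∑ i ∈ Finset.Icc 1 n, (if f i then Y i else 0)
        + ∑ i ∈ Finset.Icc 1 n, (if f i then 0 else Y i) := by
    intro f
    rw [hb, ← Finset.sum_add_distrib]
    refine Finset.sum_congr rfl fun i _ => ?_
    by_cases h : f i <;> simp [h]
  have split : ∀ f : ℕ → Bool,
      (∑ i ∈ Finset.Icc 1 n, (if f i then (i : ℤ) * b + Y i else (i : ℤ) * b) =
        ∑ i ∈ Finset.Icc 1 n, (if f i then (i : ℤ) * b else (i : ℤ) * b + Y i)) ↔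
      ∑ i ∈ Finset.Icc 1 n, (if f i then Y i else 0)
        = ∑ i ∈ Finset.Icc 1 n, (if f i then 0 else Y i) := by
    intro f
    have h1 : ∑ i ∈ Finset.Icc 1 n, (if f i then (i : ℤ) * b + Y i else (i : ℤ) * b)
        = ∑ i ∈ Finset.Icc 1 n, ((i : ℤ) * b)
          + ∑ i ∈ Finset.Icc 1 n, (if f i then Y i else 0) := by
      rw [← Finset.sum_add_distrib]
      refine Finset.sum_congr rfl fun i _ => ?_
      by_cases h : f i <;> simp [h]
    have h2 : ∑ i ∈ Finset.Icc 1 n, (if f i then (i : ℤ) * b else (i : ℤ) * b + Y i)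
        = ∑ i ∈ Finset.Icc 1 n, ((i : ℤ) * b)
          + ∑ i ∈ Finset.Icc 1 n, (if f i then 0 else Y i) := by
      rw [← Finset.sum_add_distrib]
      refine Finset.sum_congr rfl fun i _ => ?_
      by_cases h : f i <;> simp [h]
    rw [h1, h2]
    constructor <;> intro h <;> linarith
  constructor
  · rintro ⟨f, hf⟩
    rw [split f] at hf
    refine ⟨(Finset.Icc 1 n).filter (fun i => f i = true), Finset.filter_subset _ _, ?_⟩
    rw [Finset.sum_filter]
    have := key f
    linarith
  · rintro ⟨T, hT, hsum⟩
    refine ⟨fun i => decide (i ∈ T), ?_⟩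
    rw [split]
    have h1 : ∑ i ∈ Finset.Icc 1 n, (if decide (i ∈ T) then Y i else 0)
        = ∑ i ∈ T, Y i := by
      simp only [decide_eq_true_eq]
      rw [Finset.sum_ite_mem, Finset.inter_eq_right.mpr hT]
    have := key (fun i => decide (i ∈ T))
    linarith
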